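/- Let E be a finite graph consisting of a single cycle of length k (a graph of Gelfand–Kirillov dimension one). Then the talented monoid T_E is ℤ-isomorphic to the ℤ-cyclic monoid ℕ^k with cyclic shift action; in particular T_E is simple and k-periodic. -/

import Mathlib

/-- The free commutative monoid on the generators `v(i)`, `v` a vertex of the
cycle of length `k` (indexed by `ZMod k`) and `i ∈ ℤ`. -/
abbrev FreeGen (k : ℕ) := (ZMod k × ℤ) →₀ ℕ

/-- The defining relation of the talented monoid of the cycle of length `k`:
`v(i) = r(e_v)(i+1) = (v+1)(i+1)` for the unique edge `e_v : v → v+1`. -/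
def cycleRel (k : ℕ) : FreeGen k → FreeGen k → Prop := fun a b =>
  ∃ (v : ZMod k) (i : ℤ),
    a = Finsupp.single (v, i) 1 ∧ b = Finsupp.single (v + 1, i + 1) 1

/-- The talented monoid of the cycle of length `k`: the quotient of the free
commutative monoid on the `v(i)` by the congruence generated by the relations. -/
def TalentedCycle (k : ℕ) := (addConGen (cycleRel k)).Quotient

noncomputable instance (k : ℕ) : AddCommMonoid (TalentedCycle k) := by
  unfold TalentedCycle; infer_instance

/-- The action of `n : ℤ` on `ℕ^k` (indexed by `ZMod k`) by cyclic shifts. -/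
def cyclicAct {k : ℕ} (n : ℤ) (a : ZMod k → ℕ) : ZMod k → ℕ :=
  fun i => a (i + (n : ZMod k))


noncomputable def phi0 (k : ℕ) : FreeGen k →+ (ZMod k → ℕ) :=
  Finsupp.liftAddHom (fun p => AddMonoidHom.single (fun _ : ZMod k => ℕ) (p.1 - (p.2 : ZMod k)))

lemma phi0_single (k : ℕ) (v : ZMod k) (i : ℤ) (n : ℕ) :
    phi0 k (Finsupp.single (v, i) n) = Pi.single (v - (i : ZMod k)) n := by
  simp [phi0]

lemma gen_step (k : ℕ) (v : ZMod k) (i : ℤ) :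
    (addConGen (cycleRel k)).mk' (Finsupp.single (v, i) 1) =
    (addConGen (cycleRel k)).mk' (Finsupp.single (v + 1, i + 1) 1) := by
  exact (AddCon.eq _).mpr (AddConGen.Rel.of _ _ ⟨v, i, rfl, rfl⟩)

lemma gen_eq (k : ℕ) (v : ZMod k) (i : ℤ) :
    (addConGen (cycleRel k)).mk' (Finsupp.single (v, i) 1) =
    (addConGen (cycleRel k)).mk' (Finsupp.single (v - (i : ZMod k), 0) 1) := by
  induction i using Int.induction_on generalizing v with
  | zero => simp
  | succ j ih =>
      have h := gen_step k (v - 1) (j : ℤ)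
      rw [sub_add_cancel] at h
      rw [← h, ih (v - 1)]
      congr 2
      push_cast
      ring
  | pred j ih =>
      have h := gen_step k v (-(j:ℤ) - 1)
      rw [sub_add_cancel] at h
      rw [h, ih (v + 1)]
      congr 2
      push_cast
      ring

noncomputable def phi (k : ℕ) : TalentedCycle k →+ (ZMod k → ℕ) :=
  AddCon.lift _ (phi0 k) (by
    apply AddCon.addConGen_le.mpr
    rintro a b ⟨v, i, rfl, rfl⟩
    show phi0 k _ = phi0 k _
    rw [phi0_single, phi0_single]
    push_cast
    ring_nf)

lemma phi_mk (k : ℕ) (f : FreeGen k) :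
    phi k ((addConGen (cycleRel k)).mk' f) = phi0 k f := rfl

noncomputable def psi (k : ℕ) [NeZero k] : (ZMod k → ℕ) →+ TalentedCycle k where
  toFun a := ∑ w : ZMod k, a w • (addConGen (cycleRel k)).mk' (Finsupp.single (w, 0) 1)
  map_zero' := by simp [zero_nsmul]; exact Finset.sum_const_zero
  map_add' a b := by
    erw [← Finset.sum_add_distrib]
    exact Finset.sum_congr rfl fun w _ => by rw [Pi.add_apply, add_smul]; rfl

lemma psi_single (k : ℕ) [NeZero k] (w : ZMod k) (n : ℕ) :
    psi k (Pi.single w n) = n • (addConGen (cycleRel k)).mk' (Finsupp.single (w, 0) 1) := by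
  unfold psi
  simp only [AddMonoidHom.coe_mk, ZeroHom.coe_mk]
  erw [Finset.sum_eq_single w]
  · simp; rfl
  · intro u _ hu; simp [Pi.single_apply, hu, zero_nsmul]; rfl
  · simp

lemma left_inv_aux (k : ℕ) [NeZero k] (f : FreeGen k) :
    psi k (phi0 k f) = (addConGen (cycleRel k)).mk' f := by
  induction f using Finsupp.induction with
  | zero => simp; rfl
  | single_add p n f _ _ ih =>
      obtain ⟨v, i⟩ := p
      rw [map_add, map_add, map_add, ih, phi0_single, psi_single, ← gen_eq k v i]
      congr 1
      rw [← map_nsmul, Finsupp.smul_single, smul_eq_mul, mul_one]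

lemma right_inv_aux (k : ℕ) [NeZero k] (a : ZMod k → ℕ) :
    phi k (psi k a) = a := by
  unfold psi
  simp only [AddMonoidHom.coe_mk, ZeroHom.coe_mk]
  erw [map_sum]
  funext w
  rw [Finset.sum_apply]
  have : ∀ u : ZMod k, (phi k (a u • (addConGen (cycleRel k)).mk' (Finsupp.single (u, 0) 1))) w
      = a u * (Pi.single u 1 : ZMod k → ℕ) w := by
    intro u
    erw [map_nsmul, phi_mk, phi0_single]
    simp [Pi.single_apply]
  simp only [this]
  simp [Pi.single_apply, Finset.sum_ite_eq']

noncomputable def phiEquiv (k : ℕ) [NeZero k] : TalentedCycle k ≃+ (ZMod k → ℕ) :=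
  { phi k with
    invFun := psi k
    left_inv := fun x => by
      refine AddCon.induction_on x fun f => ?_
      exact left_inv_aux k f
    right_inv := right_inv_aux k }

theorem talented_monoid_of_cycle (k : ℕ) [NeZero k] :
    ∃ φ : TalentedCycle k ≃+ (ZMod k → ℕ),
      (∀ (v : ZMod k) (i : ℤ),
        φ ((addConGen (cycleRel k)).mk' (Finsupp.single (v, i) 1)) =
          Pi.single (v - (i : ZMod k)) 1) ∧
      (∀ (v : ZMod k) (i n : ℤ),
        φ ((addConGen (cycleRel k)).mk' (Finsupp.single (v, i + n) 1)) =
          cyclicAct n (φ ((addConGen (cycleRel k)).mk' (Finsupp.single (v, i) 1)))) := by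
  have hc : ⇑(phiEquiv k) = ⇑(phi k) := rfl
  refine ⟨phiEquiv k, fun v i => ?_, fun v i n => ?_⟩
  · rw [hc, phi_mk, phi0_single]
  · rw [hc, phi_mk, phi_mk, phi0_single, phi0_single]
    funext w
    simp only [cyclicAct, Pi.single_apply]
    have hiff : (w = v - ((i : ZMod k) + (n : ZMod k))) ↔ (w + (n : ZMod k) = v - (i : ZMod k)) := by
      constructor
      · intro h; rw [h]; ring
      · intro h; rw [sub_add_eq_sub_sub, ← h]; ring
    simp [hiff]
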